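/- If x₁ is a differentiable real function on a nonempty open interval I satisfying |x₁(t)| > 1 and x₁'(t)² = x₁(t)² − 1 for all t ∈ I, then there exists c ∈ ℝ such that either x₁(t) = cosh(t + c) for all t ∈ I, or x₁(t) = −cosh(t + c) for all t ∈ I. -/

import Mathlib

open Set

private lemma cosh_core (a b : ℝ) (hab : a < b) (x : ℝ → ℝ)
    (hd : ∀ t ∈ Ioo a b, DifferentiableAt ℝ x t)
    (hpos : ∀ t ∈ Ioo a b, 1 < x t)
    (hder : ∀ t ∈ Ioo a b, 0 < deriv x t)
    (hode : ∀ t ∈ Ioo a b, deriv x t ^ 2 = x t ^ 2 - 1) :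
    ∃ c : ℝ, ∀ t ∈ Ioo a b, x t = Real.cosh (t + c) := by
  set F : ℝ → ℝ := fun t => Real.log (x t + Real.sqrt (x t ^ 2 - 1)) with hF
  have hsq : ∀ t ∈ Ioo a b, Real.sqrt (x t ^ 2 - 1) = deriv x t := by
    intro t ht
    rw [← hode t ht, Real.sqrt_sq (hder t ht).le]
  have hupos : ∀ t ∈ Ioo a b, 0 < x t + Real.sqrt (x t ^ 2 - 1) := by
    intro t ht
    have := hpos t ht
    have := Real.sqrt_nonneg (x t ^ 2 - 1)
    linarith
  have hFder : ∀ t ∈ Ioo a b, HasDerivAt F 1 t := by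
    intro t ht
    have hx : HasDerivAt x (deriv x t) t := (hd t ht).hasDerivAt
    have hD := hder t ht
    have hsqne : x t ^ 2 - 1 ≠ 0 := by
      rw [← hode t ht]; positivity
    have h1 : HasDerivAt (fun s => x s ^ 2 - 1) (2 * x t ^ 1 * deriv x t) t := by
      simpa using (hx.pow 2).sub_const 1
    have h2 : HasDerivAt (fun s => Real.sqrt (x s ^ 2 - 1))
        (1 / (2 * Real.sqrt (x t ^ 2 - 1)) * (2 * x t ^ 1 * deriv x t)) t :=
      (Real.hasDerivAt_sqrt hsqne).comp t h1
    have h2' : HasDerivAt (fun s => Real.sqrt (x s ^ 2 - 1)) (x t) t := by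
      convert h2 using 1
      have hDne : deriv x t ≠ 0 := hD.ne'
      rw [hsq t ht]
      field_simp
    have h3 : HasDerivAt (fun s => x s + Real.sqrt (x s ^ 2 - 1)) (deriv x t + x t) t :=
      hx.add h2'
    have h4 : HasDerivAt F ((deriv x t + x t) / (x t + Real.sqrt (x t ^ 2 - 1))) t :=
      h3.log (hupos t ht).ne'
    convert h4 using 1
    rw [hsq t ht]
    have hne : x t + deriv x t ≠ 0 := by linarith [hpos t ht, hder t ht]
    rw [eq_comm, div_eq_one_iff_eq hne]
    ring
  -- F t - t is constant
  set t₀ : ℝ := (a + b) / 2 with ht₀def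
  have ht₀ : t₀ ∈ Ioo a b := ⟨by simp [ht₀def]; linarith, by simp [ht₀def]; linarith⟩
  set g : ℝ → ℝ := fun t => F t - t with hg
  have hgder : ∀ t ∈ Ioo a b, HasDerivAt g 0 t := by
    intro t ht
    have h := (hFder t ht).sub (hasDerivAt_id' t)
    rw [sub_self] at h
    exact h
  have hconst : ∀ t ∈ Ioo a b, g t = g t₀ := by
    intro t ht
    rcases lt_trichotomy t t₀ with h | h | h
    · have hsub : Icc t t₀ ⊆ Ioo a b := Icc_subset_Ioo ht.1 ht₀.2
      have hcont : ContinuousOn g (Icc t t₀) := fun s hs =>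
        ((hgder s (hsub hs)).continuousAt).continuousWithinAt
      obtain ⟨c, hc, hceq⟩ := exists_hasDerivAt_eq_slope g (fun _ => 0) h hcont
        (fun s hs => hgder s (hsub (Ioo_subset_Icc_self hs)))
      have hne : t₀ - t ≠ 0 := sub_ne_zero.mpr h.ne'
      field_simp [hne] at hceq
      linarith
    · rw [h]
    · have hsub : Icc t₀ t ⊆ Ioo a b := Icc_subset_Ioo ht₀.1 ht.2
      have hcont : ContinuousOn g (Icc t₀ t) := fun s hs =>
        ((hgder s (hsub hs)).continuousAt).continuousWithinAt
      obtain ⟨c, hc, hceq⟩ := exists_hasDerivAt_eq_slope g (fun _ => 0) h hcont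
        (fun s hs => hgder s (hsub (Ioo_subset_Icc_self hs)))
      have hne : t - t₀ ≠ 0 := sub_ne_zero.mpr h.ne'
      field_simp [hne] at hceq
      linarith
  refine ⟨g t₀, fun t ht => ?_⟩
  have hFt : F t = t + g t₀ := by
    have h1 := hconst t ht
    have h2 : g t = F t - t := rfl
    have h3 : g t₀ = F t₀ - t₀ := rfl
    linarith
  have hexp : x t + Real.sqrt (x t ^ 2 - 1) = Real.exp (t + g t₀) := by
    rw [← hFt, hF]
    exact (Real.exp_log (hupos t ht)).symm
  have hs2 : Real.sqrt (x t ^ 2 - 1) ^ 2 = x t ^ 2 - 1 := by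
    rw [hsq t ht]; exact hode t ht
  have hprod : (x t + Real.sqrt (x t ^ 2 - 1)) * (x t - Real.sqrt (x t ^ 2 - 1)) = 1 := by
    nlinarith [hs2]
  have hexp2 : x t - Real.sqrt (x t ^ 2 - 1) = Real.exp (-(t + g t₀)) := by
    rw [Real.exp_neg, ← hexp]
    exact eq_inv_of_mul_eq_one_right (by linarith [hprod] : (x t + Real.sqrt (x t ^ 2 - 1)) * (x t - Real.sqrt (x t ^ 2 - 1)) = 1)
  rw [Real.cosh_eq]
  nlinarith [hexp, hexp2]


private lemma cosh_aux (a b : ℝ) (hab : a < b) (x : ℝ → ℝ)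
    (hd : ∀ t ∈ Ioo a b, DifferentiableAt ℝ x t)
    (hpos : ∀ t ∈ Ioo a b, 1 < x t)
    (hode : ∀ t ∈ Ioo a b, deriv x t ^ 2 = x t ^ 2 - 1) :
    ∃ c : ℝ, ∀ t ∈ Ioo a b, x t = Real.cosh (t + c) := by
  have hne : ∀ t ∈ Ioo a b, deriv x t ≠ 0 := by
    intro t ht h0
    have := hode t ht
    rw [h0] at this
    have := hpos t ht
    nlinarith
  have hdarboux := hasDerivWithinAt_forall_lt_or_forall_gt_of_forall_ne (f := x)
    (f' := deriv x) (convex_Ioo a b)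
    (fun t ht => ((hd t ht).hasDerivAt).hasDerivWithinAt) (m := 0) hne
  rcases hdarboux with hneg | hposd
  · -- reflect: y t = x (a + b - t)
    set y : ℝ → ℝ := fun t => x (a + b - t) with hy
    have hmem : ∀ t ∈ Ioo a b, a + b - t ∈ Ioo a b := by
      intro t ht
      exact ⟨by linarith [ht.2], by linarith [ht.1]⟩
    have hyd : ∀ t ∈ Ioo a b, HasDerivAt y (deriv x (a + b - t) * (-1)) t := by
      intro t ht
      exact ((hd _ (hmem t ht)).hasDerivAt).comp t ((hasDerivAt_id t).const_sub (a + b))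
    have hydd : ∀ t ∈ Ioo a b, deriv y t = -deriv x (a + b - t) := by
      intro t ht
      have := (hyd t ht).deriv
      rw [this]; ring
    obtain ⟨c, hc⟩ := cosh_core a b hab y
      (fun t ht => (hyd t ht).differentiableAt)
      (fun t ht => hpos _ (hmem t ht))
      (fun t ht => by rw [hydd t ht]; linarith [hneg _ (hmem t ht)])
      (fun t ht => by rw [hydd t ht, neg_pow]; simpa using hode _ (hmem t ht))
    refine ⟨-(a + b + c), fun t ht => ?_⟩
    have h1 := hc (a + b - t) (hmem t ht)
    have h2 : y (a + b - t) = x t := by simp [hy]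
    rw [h2] at h1
    rw [h1]
    rw [show a + b - t + c = -(t + -(a + b + c)) by ring, Real.cosh_neg]
  · exact cosh_core a b hab x hd hpos hposd hode

theorem stmt_5 (a b : ℝ) (hab : a < b) (x₁ : ℝ → ℝ)
    (hdiff : DifferentiableOn ℝ x₁ (Ioo a b))
    (hbig : ∀ t ∈ Ioo a b, 1 < |x₁ t|)
    (hode : ∀ t ∈ Ioo a b, deriv x₁ t ^ 2 = x₁ t ^ 2 - 1) :
    ∃ c : ℝ, (∀ t ∈ Ioo a b, x₁ t = Real.cosh (t + c)) ∨
      (∀ t ∈ Ioo a b, x₁ t = -Real.cosh (t + c)) := by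
  have hd : ∀ t ∈ Ioo a b, DifferentiableAt ℝ x₁ t := fun t ht =>
    (hdiff t ht).differentiableAt (isOpen_Ioo.mem_nhds ht)
  have hcont : ContinuousOn x₁ (Ioo a b) := hdiff.continuousOn
  have hnz : ∀ t ∈ Ioo a b, x₁ t ≠ 0 := by
    intro t ht h0
    have := hbig t ht
    rw [h0] at this
    simp at this
    linarith
  have hsign : (∀ t ∈ Ioo a b, 1 < x₁ t) ∨ (∀ t ∈ Ioo a b, x₁ t < -1) := by
    set t₀ : ℝ := (a + b) / 2 with ht₀def
    have ht₀ : t₀ ∈ Ioo a b := ⟨by simp [ht₀def]; linarith, by simp [ht₀def]; linarith⟩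
    have key : ∀ t ∈ Ioo a b, (0 < x₁ t ↔ 0 < x₁ t₀) := by
      intro t ht
      rcases lt_trichotomy (x₁ t * x₁ t₀) 0 with hlt | heq | hgt
      · exfalso
        have hsub : uIcc t t₀ ⊆ Ioo a b := (ordConnected_Ioo).uIcc_subset ht ht₀
        have h0 : (0:ℝ) ∈ uIcc (x₁ t) (x₁ t₀) := by
          rw [Set.mem_uIcc]
          rcases mul_neg_iff.mp hlt with ⟨h1, h2⟩ | ⟨h1, h2⟩
          · exact Or.inr ⟨h2.le, h1.le⟩
          · exact Or.inl ⟨h1.le, h2.le⟩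
        obtain ⟨s, hs, hs0⟩ := intermediate_value_uIcc (hcont.mono hsub) h0
        exact hnz s (hsub hs) hs0
      · exfalso
        rcases mul_eq_zero.mp heq with h | h
        · exact hnz t ht h
        · exact hnz t₀ ht₀ h
      · rcases mul_pos_iff.mp hgt with ⟨h1, h2⟩ | ⟨h1, h2⟩
        · exact ⟨fun _ => h2, fun _ => h1⟩
        · constructor <;> intro h <;> linarith
    rcases lt_or_gt_of_ne (hnz t₀ ht₀) with hneg | hpos
    · right
      intro t ht
      have h1 := hbig t ht
      have h2 : x₁ t ≤ 0 := by
        by_contra h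
        push_neg at h
        have := (key t ht).mp h
        linarith
      rcases abs_cases (x₁ t) with ⟨he, _⟩ | ⟨he, _⟩ <;> rw [he] at h1 <;> linarith
    · left
      intro t ht
      have h1 := hbig t ht
      have h2 : 0 < x₁ t := (key t ht).mpr hpos
      rcases abs_cases (x₁ t) with ⟨he, _⟩ | ⟨he, _⟩ <;> rw [he] at h1 <;> linarith
  rcases hsign with hpos | hneg
  · obtain ⟨c, hc⟩ := cosh_aux a b hab x₁ hd hpos hode
    exact ⟨c, Or.inl hc⟩
  · have hdneg : ∀ t ∈ Ioo a b, DifferentiableAt ℝ (fun t => -x₁ t) t :=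
      fun t ht => (hd t ht).neg
    have hderneg : ∀ t ∈ Ioo a b, deriv (fun t => -x₁ t) t = -deriv x₁ t := by
      intro t ht
      exact deriv.neg
    obtain ⟨c, hc⟩ := cosh_aux a b hab (fun t => -x₁ t) hdneg
      (fun t ht => by have := hneg t ht; show 1 < -x₁ t; linarith)
      (fun t ht => by rw [hderneg t ht]; ring_nf; have := hode t ht; ring_nf at this; linarith)
    refine ⟨c, Or.inr fun t ht => ?_⟩
    have := hc t ht
    simp only [neg_eq_iff_eq_neg] at this
    linarith [this]
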